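/- Let F ≥ 4 and m ≥ 1 be integers. Then the maximum K for which a (K, F, F−2, mF+F−2)-PDA exists equals (m·F·(F−1) + (F−2)·(F−3))/2 + ⌊(F−2)/2⌋; i.e., K_{(F,2,mF+F−2)} = m·K_{(F,2,F)} + K_{(F−2,2,F−2)} + K_{(2,2,F−2)}. -/

import Mathlib

/-- A `(K, F, Z, S)` placement delivery array: an `F × K` array over
`{0, …, S-1} ∪ {*}` (with `none` playing the role of `*`) such that
(1) each integer occurs at most once in each row and in each column,
(2) whenever two distinct cells `(a, b)` and `(c, d)` contain the same
integer, the opposite corners `(a, d)` and `(c, b)` contain `*`, and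
(3) the symbol `*` occurs exactly `Z` times in each column. -/
def IsPDA (K F Z S : ℕ) (P : Fin F → Fin K → Option (Fin S)) : Prop :=
  (∀ (i : Fin F) (j j' : Fin K) (s : Fin S), P i j = some s → P i j' = some s → j = j') ∧
  (∀ (i i' : Fin F) (j : Fin K) (s : Fin S), P i j = some s → P i' j = some s → i = i') ∧
  (∀ (a c : Fin F) (b d : Fin K) (s : Fin S),
      (a, b) ≠ (c, d) → P a b = some s → P c d = some s →
      P a d = none ∧ P c b = none) ∧
  (∀ j : Fin K, (Finset.univ.filter (fun i => P i j = none)).card = Z)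

/-- There exists a `(K, F, Z, S)` placement delivery array. -/
def PDAExists (K F Z S : ℕ) : Prop :=
  ∃ P : Fin F → Fin K → Option (Fin S), IsPDA K F Z S P


def Edge (n : ℕ) := {p : Fin n × Fin n // p.2.val < p.1.val}

instance (n : ℕ) : DecidableEq (Edge n) := by unfold Edge; infer_instance
instance (n : ℕ) : Fintype (Edge n) := by unfold Edge; infer_instance

def edgeEquiv (n : ℕ) : Edge n ≃ Σ j : Fin n, Fin j.val where
  toFun e := ⟨e.1.1, ⟨e.1.2.val, e.2⟩⟩
  invFun x := ⟨(x.1, ⟨x.2.val, lt_trans x.2.2 x.1.2⟩), x.2.2⟩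
  left_inv e := rfl
  right_inv x := rfl

lemma card_edge (n : ℕ) : Fintype.card (Edge n) * 2 = n * (n - 1) := by
  rw [Fintype.card_congr (edgeEquiv n), Fintype.card_sigma]
  simp only [Fintype.card_fin]
  rw [show (∑ x : Fin n, (x:ℕ)) = ∑ i ∈ Finset.range n, i from Fin.sum_univ_eq_sum_range (fun i => i) n, Finset.sum_range_id_mul_two]

abbrev Col (F m : ℕ) := (Fin m × Edge F) ⊕ (Edge (F - 2) ⊕ Fin ((F - 2) / 2))
abbrev PSym (F m : ℕ) := (Fin m × Fin F) ⊕ Fin (F - 2)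

def Q (F m : ℕ) : Fin F → Col F m → Option (PSym F m)
  | i, .inl (l, e) =>
      if i = e.1.2 then some (.inl (l, e.1.1))
      else if i = e.1.1 then some (.inl (l, e.1.2)) else none
  | i, .inr (.inl e) =>
      if i = Fin.castLE (Nat.sub_le F 2) e.1.2 then some (.inr e.1.1)
      else if i = Fin.castLE (Nat.sub_le F 2) e.1.1 then some (.inr e.1.2) else none
  | i, .inr (.inr k) =>
      if i.val = F - 2 then some (.inr ⟨2 * k.val, by have := k.2; omega⟩)
      else if i.val = F - 1 then some (.inr ⟨2 * k.val + 1, by have := k.2; omega⟩) else none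

lemma card_sym (F m : ℕ) (hF : 2 ≤ F) : Fintype.card (PSym F m) = m * F + F - 2 := by
  simp [Fintype.card_sum, Fintype.card_prod, Fintype.card_fin]
  omega

lemma card_col (F m : ℕ) :
    Fintype.card (Col F m)
      = (m * F * (F - 1) + (F - 2) * (F - 3)) / 2 + (F - 2) / 2 := by
  simp only [Fintype.card_sum, Fintype.card_prod, Fintype.card_fin]
  have h1 := card_edge F
  have h2 := card_edge (F - 2)
  have key : m * Fintype.card (Edge F) + Fintype.card (Edge (F - 2))
      = (m * F * (F - 1) + (F - 2) * (F - 3)) / 2 := by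
    symm
    apply Nat.div_eq_of_eq_mul_left (by norm_num)
    have : (F - 2) * (F - 2 - 1) = (F - 2) * (F - 3) := by rw [Nat.sub_sub]
    calc m * F * (F - 1) + (F - 2) * (F - 3)
        = m * (F * (F - 1)) + (F - 2) * (F - 2 - 1) := by rw [this]; ring
      _ = m * (Fintype.card (Edge F) * 2) + Fintype.card (Edge (F - 2)) * 2 := by
          rw [h1, h2]
      _ = (m * Fintype.card (Edge F) + Fintype.card (Edge (F - 2))) * 2 := by ring
  rw [← add_assoc, key]

lemma Q_inl_cases {F m : ℕ} {i : Fin F} {l : Fin m} {e : Edge F} {s : PSym F m}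
    (h : Q F m i (.inl (l, e)) = some s) :
    (i = e.1.2 ∧ s = .inl (l, e.1.1)) ∨ (i = e.1.1 ∧ s = .inl (l, e.1.2)) := by
  simp only [Q] at h
  split_ifs at h with h1 h2
  · exact Or.inl ⟨h1, (Option.some_inj.mp h).symm⟩
  · exact Or.inr ⟨h2, (Option.some_inj.mp h).symm⟩

lemma Q_inrl_cases {F m : ℕ} {i : Fin F} {e : Edge (F - 2)} {s : PSym F m}
    (h : Q F m i (.inr (.inl e)) = some s) :
    (i = Fin.castLE (Nat.sub_le F 2) e.1.2 ∧ s = .inr e.1.1) ∨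
    (i = Fin.castLE (Nat.sub_le F 2) e.1.1 ∧ s = .inr e.1.2) := by
  simp only [Q] at h
  split_ifs at h with h1 h2
  · exact Or.inl ⟨h1, (Option.some_inj.mp h).symm⟩
  · exact Or.inr ⟨h2, (Option.some_inj.mp h).symm⟩

lemma Q_inrr_cases {F m : ℕ} {i : Fin F} {k : Fin ((F - 2) / 2)} {s : PSym F m}
    (h : Q F m i (.inr (.inr k)) = some s) :
    (i.val = F - 2 ∧ s = .inr ⟨2 * k.val, by have := k.2; omega⟩) ∨
    (i.val = F - 1 ∧ s = .inr ⟨2 * k.val + 1, by have := k.2; omega⟩) := by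
  simp only [Q] at h
  split_ifs at h with h1 h2
  · exact Or.inl ⟨h1, (Option.some_inj.mp h).symm⟩
  · exact Or.inr ⟨h2, (Option.some_inj.mp h).symm⟩

lemma Q_inl_none {F m : ℕ} {i : Fin F} {l : Fin m} {e : Edge F} :
    Q F m i (.inl (l, e)) = none ↔ i ≠ e.1.2 ∧ i ≠ e.1.1 := by
  simp only [Q]
  split_ifs with h1 h2 <;> simp_all

lemma Q_inrl_none {F m : ℕ} {i : Fin F} {e : Edge (F - 2)} :
    Q F m i (.inr (.inl e)) = none ↔
      i ≠ Fin.castLE (Nat.sub_le F 2) e.1.2 ∧ i ≠ Fin.castLE (Nat.sub_le F 2) e.1.1 := by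
  simp only [Q]
  split_ifs with h1 h2 <;> simp_all

lemma Q_inrr_none {F m : ℕ} {i : Fin F} {k : Fin ((F - 2) / 2)} :
    Q F m i (.inr (.inr k)) = none ↔ i.val ≠ F - 2 ∧ i.val ≠ F - 1 := by
  simp only [Q]
  split_ifs with h1 h2 <;> simp_all

lemma Q_col (F m : ℕ) (i i' : Fin F) (c : Col F m) (s : PSym F m)
    (h : Q F m i c = some s) (h' : Q F m i' c = some s) : i = i' := by
  rcases c with ⟨l, e⟩ | e | k
  · rcases Q_inl_cases h with ⟨hi, hs⟩ | ⟨hi, hs⟩ <;>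
      rcases Q_inl_cases h' with ⟨hi', hs'⟩ | ⟨hi', hs'⟩
    · exact hi.trans hi'.symm
    · have : e.1.1 = e.1.2 := by simpa using hs.symm.trans hs'
      have hv : e.1.1.val = e.1.2.val := by rw [this]
      exact absurd e.2 (by omega)
    · have : e.1.2 = e.1.1 := by simpa using hs.symm.trans hs'
      have hv : e.1.2.val = e.1.1.val := by rw [this]
      exact absurd e.2 (by omega)
    · exact hi.trans hi'.symm
  · rcases Q_inrl_cases h with ⟨hi, hs⟩ | ⟨hi, hs⟩ <;>
      rcases Q_inrl_cases h' with ⟨hi', hs'⟩ | ⟨hi', hs'⟩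
    · exact hi.trans hi'.symm
    · have : e.1.1 = e.1.2 := by simpa using hs.symm.trans hs'
      have hv : e.1.1.val = e.1.2.val := by rw [this]
      exact absurd e.2 (by omega)
    · have : e.1.2 = e.1.1 := by simpa using hs.symm.trans hs'
      have hv : e.1.2.val = e.1.1.val := by rw [this]
      exact absurd e.2 (by omega)
    · exact hi.trans hi'.symm
  · rcases Q_inrr_cases h with ⟨hi, hs⟩ | ⟨hi, hs⟩ <;>
      rcases Q_inrr_cases h' with ⟨hi', hs'⟩ | ⟨hi', hs'⟩
    · exact Fin.ext (hi.trans hi'.symm)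
    · have : (2 : ℕ) * k.val = 2 * k.val + 1 := by
        have := hs.symm.trans hs'
        simpa [Fin.ext_iff] using this
      omega
    · have : (2 : ℕ) * k.val + 1 = 2 * k.val := by
        have := hs.symm.trans hs'
        simpa [Fin.ext_iff] using this
      omega
    · exact Fin.ext (hi.trans hi'.symm)

lemma Q_row (F m : ℕ) (hF : 4 ≤ F) (i : Fin F) (c c' : Col F m) (s : PSym F m)
    (h : Q F m i c = some s) (h' : Q F m i c' = some s) : c = c' := by
  rcases c with ⟨l, e⟩ | e | k <;> rcases c' with ⟨l', e'⟩ | e' | k'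
  · -- A, A
    rcases Q_inl_cases h with ⟨hi, hs⟩ | ⟨hi, hs⟩ <;>
      rcases Q_inl_cases h' with ⟨hi', hs'⟩ | ⟨hi', hs'⟩
    · obtain ⟨hl, h1⟩ : l = l' ∧ e.1.1 = e'.1.1 := by simpa using hs.symm.trans hs'
      have h2 : e.1.2 = e'.1.2 := hi.symm.trans hi'
      rw [hl, Subtype.ext (Prod.ext h1 h2)]
    · obtain ⟨hl, h1⟩ : l = l' ∧ e.1.1 = e'.1.2 := by simpa using hs.symm.trans hs'
      have v1 := e.2; have v2 := e'.2
      have w1 : i.val = e.1.2.val := by rw [hi]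
      have w2 : i.val = e'.1.1.val := by rw [hi']
      have w3 : e.1.1.val = e'.1.2.val := by rw [h1]
      omega
    · obtain ⟨hl, h1⟩ : l = l' ∧ e.1.2 = e'.1.1 := by simpa using hs.symm.trans hs'
      have v1 := e.2; have v2 := e'.2
      have w1 : i.val = e.1.1.val := by rw [hi]
      have w2 : i.val = e'.1.2.val := by rw [hi']
      have w3 : e.1.2.val = e'.1.1.val := by rw [h1]
      omega
    · obtain ⟨hl, h1⟩ : l = l' ∧ e.1.2 = e'.1.2 := by simpa using hs.symm.trans hs'
      have h2 : e.1.1 = e'.1.1 := hi.symm.trans hi'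
      rw [hl, Subtype.ext (Prod.ext h2 h1)]
  · rcases Q_inl_cases h with ⟨hi, hs⟩ | ⟨hi, hs⟩ <;>
      rcases Q_inrl_cases h' with ⟨hi', hs'⟩ | ⟨hi', hs'⟩ <;>
      · exact absurd (hs.symm.trans hs') (by simp)
  · rcases Q_inl_cases h with ⟨hi, hs⟩ | ⟨hi, hs⟩ <;>
      rcases Q_inrr_cases h' with ⟨hi', hs'⟩ | ⟨hi', hs'⟩ <;>
      · exact absurd (hs.symm.trans hs') (by simp)
  · rcases Q_inrl_cases h with ⟨hi, hs⟩ | ⟨hi, hs⟩ <;>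
      rcases Q_inl_cases h' with ⟨hi', hs'⟩ | ⟨hi', hs'⟩ <;>
      · exact absurd (hs.symm.trans hs') (by simp)
  · -- B1, B1
    rcases Q_inrl_cases h with ⟨hi, hs⟩ | ⟨hi, hs⟩ <;>
      rcases Q_inrl_cases h' with ⟨hi', hs'⟩ | ⟨hi', hs'⟩
    · have h1 : e.1.1 = e'.1.1 := by simpa using hs.symm.trans hs'
      have h2 : e.1.2 = e'.1.2 := by
        have := hi.symm.trans hi'
        exact Fin.ext (by simpa [Fin.ext_iff] using this)
      rw [Subtype.ext (Prod.ext h1 h2)]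
    · have h1 : e.1.1 = e'.1.2 := by simpa using hs.symm.trans hs'
      have v1 := e.2; have v2 := e'.2
      have w1 : i.val = e.1.2.val := by simpa [Fin.ext_iff] using hi
      have w2 : i.val = e'.1.1.val := by simpa [Fin.ext_iff] using hi'
      have w3 : e.1.1.val = e'.1.2.val := by rw [h1]
      omega
    · have h1 : e.1.2 = e'.1.1 := by simpa using hs.symm.trans hs'
      have v1 := e.2; have v2 := e'.2
      have w1 : i.val = e.1.1.val := by simpa [Fin.ext_iff] using hi
      have w2 : i.val = e'.1.2.val := by simpa [Fin.ext_iff] using hi'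
      have w3 : e.1.2.val = e'.1.1.val := by rw [h1]
      omega
    · have h1 : e.1.2 = e'.1.2 := by simpa using hs.symm.trans hs'
      have h2 : e.1.1 = e'.1.1 := by
        have := hi.symm.trans hi'
        exact Fin.ext (by simpa [Fin.ext_iff] using this)
      rw [Subtype.ext (Prod.ext h2 h1)]
  · -- B1, B2 : row contradiction
    rcases Q_inrl_cases h with ⟨hi, hs⟩ | ⟨hi, hs⟩ <;>
      rcases Q_inrr_cases h' with ⟨hi', hs'⟩ | ⟨hi', hs'⟩ <;>
      · have v := e.2
        have w1 : i.val < F - 2 := by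
          first
          | (have : i.val = e.1.2.val := by simpa [Fin.ext_iff] using hi
             have := e.1.2.isLt; omega)
          | (have : i.val = e.1.1.val := by simpa [Fin.ext_iff] using hi
             have := e.1.1.isLt; omega)
        omega
  · rcases Q_inrr_cases h with ⟨hi, hs⟩ | ⟨hi, hs⟩ <;>
      rcases Q_inl_cases h' with ⟨hi', hs'⟩ | ⟨hi', hs'⟩ <;>
      · exact absurd (hs.symm.trans hs') (by simp)
  · -- B2, B1
    rcases Q_inrr_cases h with ⟨hi, hs⟩ | ⟨hi, hs⟩ <;>
      rcases Q_inrl_cases h' with ⟨hi', hs'⟩ | ⟨hi', hs'⟩ <;>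
      · have v := e'.2
        have w1 : i.val < F - 2 := by
          first
          | (have : i.val = e'.1.2.val := by simpa [Fin.ext_iff] using hi'
             have := e'.1.2.isLt; omega)
          | (have : i.val = e'.1.1.val := by simpa [Fin.ext_iff] using hi'
             have := e'.1.1.isLt; omega)
        omega
  · -- B2, B2
    rcases Q_inrr_cases h with ⟨hi, hs⟩ | ⟨hi, hs⟩ <;>
      rcases Q_inrr_cases h' with ⟨hi', hs'⟩ | ⟨hi', hs'⟩
    · have hk : (2 : ℕ) * k.val = 2 * k'.val := by
        simpa [Fin.ext_iff] using hs.symm.trans hs'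
      rw [show k = k' from Fin.ext (by omega)]
    · omega
    · omega
    · have hk : (2 : ℕ) * k.val + 1 = 2 * k'.val + 1 := by
        simpa [Fin.ext_iff] using hs.symm.trans hs'
      rw [show k = k' from Fin.ext (by omega)]

lemma Q_cross (F m : ℕ) (hF : 4 ≤ F) (i i' : Fin F) (c c' : Col F m) (s : PSym F m)
    (hne : (i, c) ≠ (i', c'))
    (h : Q F m i c = some s) (h' : Q F m i' c' = some s) :
    Q F m i c' = none ∧ Q F m i' c = none := by
  have hii : i ≠ i' := by
    intro hi
    subst hi
    exact hne (by rw [Q_row F m hF i c c' s h h'])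
  have hvii : i.val ≠ i'.val := fun hv => hii (Fin.ext hv)
  clear hne
  rcases c with ⟨l, e⟩ | e | k <;> rcases c' with ⟨l', e'⟩ | e' | k'
  · -- A, A
    have v1 := e.2; have v2 := e'.2
    rcases Q_inl_cases h with ⟨hi, hs⟩ | ⟨hi, hs⟩ <;>
      rcases Q_inl_cases h' with ⟨hi', hs'⟩ | ⟨hi', hs'⟩ <;>
      [ (obtain ⟨hl, h1⟩ : l = l' ∧ e.1.1 = e'.1.1 := by simpa using hs.symm.trans hs');
        (obtain ⟨hl, h1⟩ : l = l' ∧ e.1.1 = e'.1.2 := by simpa using hs.symm.trans hs');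
        (obtain ⟨hl, h1⟩ : l = l' ∧ e.1.2 = e'.1.1 := by simpa using hs.symm.trans hs');
        (obtain ⟨hl, h1⟩ : l = l' ∧ e.1.2 = e'.1.2 := by simpa using hs.symm.trans hs')] <;>
      ( have w1 : i.val = _ := congrArg Fin.val hi
        have w2 : i'.val = _ := congrArg Fin.val hi'
        have w3 := congrArg Fin.val h1
        exact ⟨Q_inl_none.mpr ⟨Fin.ne_of_val_ne (by omega), Fin.ne_of_val_ne (by omega)⟩,
          Q_inl_none.mpr ⟨Fin.ne_of_val_ne (by omega), Fin.ne_of_val_ne (by omega)⟩⟩ )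
  · rcases Q_inl_cases h with ⟨hi, hs⟩ | ⟨hi, hs⟩ <;>
      rcases Q_inrl_cases h' with ⟨hi', hs'⟩ | ⟨hi', hs'⟩ <;>
      exact absurd (hs.symm.trans hs') (by simp)
  · rcases Q_inl_cases h with ⟨hi, hs⟩ | ⟨hi, hs⟩ <;>
      rcases Q_inrr_cases h' with ⟨hi', hs'⟩ | ⟨hi', hs'⟩ <;>
      exact absurd (hs.symm.trans hs') (by simp)
  · rcases Q_inrl_cases h with ⟨hi, hs⟩ | ⟨hi, hs⟩ <;>
      rcases Q_inl_cases h' with ⟨hi', hs'⟩ | ⟨hi', hs'⟩ <;>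
      exact absurd (hs.symm.trans hs') (by simp)
  · -- B1, B1
    have v1 := e.2; have v2 := e'.2
    rcases Q_inrl_cases h with ⟨hi, hs⟩ | ⟨hi, hs⟩ <;>
      rcases Q_inrl_cases h' with ⟨hi', hs'⟩ | ⟨hi', hs'⟩ <;>
      [ (have h1 : e.1.1 = e'.1.1 := by simpa using hs.symm.trans hs');
        (have h1 : e.1.1 = e'.1.2 := by simpa using hs.symm.trans hs');
        (have h1 : e.1.2 = e'.1.1 := by simpa using hs.symm.trans hs');
        (have h1 : e.1.2 = e'.1.2 := by simpa using hs.symm.trans hs')] <;>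
      ( have w1 := congrArg Fin.val hi
        have w2 := congrArg Fin.val hi'
        have w3 := congrArg Fin.val h1
        simp only [Fin.coe_castLE] at w1 w2
        exact ⟨Q_inrl_none.mpr ⟨Fin.ne_of_val_ne (by simp only [Fin.coe_castLE]; omega),
            Fin.ne_of_val_ne (by simp only [Fin.coe_castLE]; omega)⟩,
          Q_inrl_none.mpr ⟨Fin.ne_of_val_ne (by simp only [Fin.coe_castLE]; omega),
            Fin.ne_of_val_ne (by simp only [Fin.coe_castLE]; omega)⟩⟩ )
  · -- B1, B2
    rcases Q_inrl_cases h with ⟨hi, hs⟩ | ⟨hi, hs⟩ <;>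
      rcases Q_inrr_cases h' with ⟨hi', hs'⟩ | ⟨hi', hs'⟩ <;>
      ( have w1 := congrArg Fin.val hi
        simp only [Fin.coe_castLE] at w1
        first
        | (have hlt : e.1.2.val < F - 2 := e.1.2.isLt
           have hlt2 : e.1.1.val < F - 2 := e.1.1.isLt
           exact ⟨Q_inrr_none.mpr ⟨by omega, by omega⟩,
             Q_inrl_none.mpr ⟨Fin.ne_of_val_ne (by simp only [Fin.coe_castLE]; omega),
               Fin.ne_of_val_ne (by simp only [Fin.coe_castLE]; omega)⟩⟩) )
  · -- B2, A
    rcases Q_inrr_cases h with ⟨hi, hs⟩ | ⟨hi, hs⟩ <;>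
      rcases Q_inl_cases h' with ⟨hi', hs'⟩ | ⟨hi', hs'⟩ <;>
      exact absurd (hs.symm.trans hs') (by simp)
  · -- B2, B1
    rcases Q_inrr_cases h with ⟨hi, hs⟩ | ⟨hi, hs⟩ <;>
      rcases Q_inrl_cases h' with ⟨hi', hs'⟩ | ⟨hi', hs'⟩ <;>
      ( have w1 := congrArg Fin.val hi'
        simp only [Fin.coe_castLE] at w1
        have hlt : e'.1.2.val < F - 2 := e'.1.2.isLt
        have hlt2 : e'.1.1.val < F - 2 := e'.1.1.isLt
        exact ⟨Q_inrl_none.mpr ⟨Fin.ne_of_val_ne (by simp only [Fin.coe_castLE]; omega),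
            Fin.ne_of_val_ne (by simp only [Fin.coe_castLE]; omega)⟩,
          Q_inrr_none.mpr ⟨by omega, by omega⟩⟩ )
  · -- B2, B2
    rcases Q_inrr_cases h with ⟨hi, hs⟩ | ⟨hi, hs⟩ <;>
      rcases Q_inrr_cases h' with ⟨hi', hs'⟩ | ⟨hi', hs'⟩
    · omega
    · have : (2 : ℕ) * k.val = 2 * k'.val + 1 := by
        simpa [Fin.ext_iff] using hs.symm.trans hs'
      omega
    · have : (2 : ℕ) * k.val + 1 = 2 * k'.val := by
        simpa [Fin.ext_iff] using hs.symm.trans hs'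
      omega
    · omega

lemma filter_none_card {F : ℕ} (g : Fin F → Prop) [DecidablePred g] (r1 r2 : Fin F)
    (hne : r1 ≠ r2) (hch : ∀ i, g i ↔ i ≠ r1 ∧ i ≠ r2) :
    (Finset.univ.filter g).card = F - 2 := by
  have : Finset.univ.filter g = Finset.univ \ {r1, r2} := by
    ext i
    simp [hch, Finset.mem_sdiff]
  rw [this, Finset.card_sdiff_of_subset (Finset.subset_univ _)]
  rw [Finset.card_pair hne]
  simp

lemma Q_stars (F m : ℕ) (hF : 4 ≤ F) (c : Col F m) :
    (Finset.univ.filter fun i => Q F m i c = none).card = F - 2 := by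
  rcases c with ⟨l, e⟩ | e | k
  · exact filter_none_card _ e.1.2 e.1.1
      (Fin.ne_of_val_ne (by have := e.2; omega)) (fun i => Q_inl_none)
  · exact filter_none_card _ (Fin.castLE (Nat.sub_le F 2) e.1.2)
      (Fin.castLE (Nat.sub_le F 2) e.1.1)
      (Fin.ne_of_val_ne (by simp only [Fin.coe_castLE]; have := e.2; omega))
      (fun i => Q_inrl_none)
  · exact filter_none_card _ ⟨F - 2, by omega⟩ ⟨F - 1, by omega⟩
      (Fin.ne_of_val_ne (by simp; omega))
      (fun i => by rw [Q_inrr_none]; simp [Fin.ext_iff])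

lemma pda_construction (F m : ℕ) (hF : 4 ≤ F) :
    PDAExists ((m * F * (F - 1) + (F - 2) * (F - 3)) / 2 + (F - 2) / 2) F (F - 2)
      (m * F + F - 2) := by
  have hC : Fintype.card (Col F m)
      = (m * F * (F - 1) + (F - 2) * (F - 3)) / 2 + (F - 2) / 2 := card_col F m
  have hS : Fintype.card (PSym F m) = m * F + F - 2 := card_sym F m (by omega)
  let eC := Fintype.equivFinOfCardEq hC
  let eS := Fintype.equivFinOfCardEq hS
  refine ⟨fun i j => (Q F m i (eC.symm j)).map eS, ?_, ?_, ?_, ?_⟩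
  · intro i j j' s h h'
    rw [Option.map_eq_some_iff] at h h'
    obtain ⟨a, ha, has⟩ := h
    obtain ⟨a', ha', has'⟩ := h'
    have : a = a' := eS.injective (has.trans has'.symm)
    subst this
    exact eC.symm.injective (Q_row F m hF i _ _ a ha ha')
  · intro i i' j s h h'
    rw [Option.map_eq_some_iff] at h h'
    obtain ⟨a, ha, has⟩ := h
    obtain ⟨a', ha', has'⟩ := h'
    have : a = a' := eS.injective (has.trans has'.symm)
    subst this
    exact Q_col F m i i' _ a ha ha'
  · intro a c b d s hne h h'
    rw [Option.map_eq_some_iff] at h h'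
    obtain ⟨x, hx, hxs⟩ := h
    obtain ⟨x', hx', hxs'⟩ := h'
    have hxx : x = x' := eS.injective (hxs.trans hxs'.symm)
    subst hxx
    have hne2 : (a, eC.symm b) ≠ (c, eC.symm d) := by
      intro hcontra
      apply hne
      have h1 := congrArg Prod.fst hcontra
      have h2 := congrArg Prod.snd hcontra
      simp only at h1 h2
      rw [h1, eC.symm.injective h2]
    obtain ⟨g1, g2⟩ := Q_cross F m hF a c (eC.symm b) (eC.symm d) x hne2 hx hx'
    constructor <;> simp [g1, g2]
  · intro j
    have h := Q_stars F m hF (eC.symm j)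
    simpa [Option.map_eq_none_iff] using h

lemma pda_upper (F m K S : ℕ) (hF : 4 ≤ F) (hS : S = m * F + F - 2)
    (hex : PDAExists K F (F - 2) S) :
    K ≤ (m * F * (F - 1) + (F - 2) * (F - 3)) / 2 + (F - 2) / 2 := by
  obtain ⟨P, h1, h2, h3, h4⟩ := hex
  have hScard : (Finset.univ : Finset (Fin S)).card = S := by simp
  have hFcard : (Finset.univ : Finset (Fin F)).card = F := by simp
  -- each column has exactly two filled cells
  have col2 : ∀ j : Fin K,
      (Finset.univ.filter fun i => ¬(P i j = none)).card = 2 := by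
    intro j
    have := Finset.card_filter_add_card_filter_not
      (s := (Finset.univ : Finset (Fin F))) (p := fun i => P i j = none)
    rw [h4 j, hFcard] at this
    omega
  -- occurrences of a symbol
  set occ : Fin S → Finset (Fin F × Fin K) :=
    fun s => Finset.univ.filter fun p => P p.1 p.2 = some s with hocc
  set rows : Fin S → Finset (Fin F) := fun s => (occ s).image Prod.fst with hrows
  set cols : Fin S → Finset (Fin K) := fun s => (occ s).image Prod.snd with hcols
  have occ_mem : ∀ s p, p ∈ occ s ↔ P p.1 p.2 = some s := by
    intro s p; simp [hocc]
  have rows_card : ∀ s, (rows s).card = (occ s).card := by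
    intro s
    apply Finset.card_image_of_injOn
    intro p hp q hq hpq
    simp only [Finset.mem_coe, occ_mem] at hp hq
    have hq' : P p.1 q.2 = some s := by rw [hpq]; exact hq
    exact Prod.ext hpq (h1 _ _ _ _ hp hq')
  have cols_card : ∀ s, (cols s).card = (occ s).card := by
    intro s
    apply Finset.card_image_of_injOn
    intro p hp q hq hpq
    simp only [Finset.mem_coe, occ_mem] at hp hq
    have hq' : P q.1 p.2 = some s := by rw [← hpq] at hq; exact hq
    exact Prod.ext (h2 _ _ _ _ hp hq') hpq
  have rows_mem : ∀ s x, x ∈ rows s ↔ ∃ j : Fin K, P x j = some s := by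
    intro s x
    simp only [hrows, Finset.mem_image]
    constructor
    · rintro ⟨p, hp, rfl⟩
      exact ⟨p.2, (occ_mem s p).mp hp⟩
    · rintro ⟨j, hj⟩
      exact ⟨(x, j), (occ_mem s (x, j)).mpr hj, rfl⟩
  have other_row : ∀ (s : Fin S) (i : Fin F) (j : Fin K), (i, j) ∈ occ s →
      ∃ i' : Fin F, i' ≠ i ∧ ¬(P i' j = none) ∧ i' ∉ rows s := by
    intro s i j hij
    rw [occ_mem] at hij
    have hmem : i ∈ Finset.univ.filter fun i => ¬(P i j = none) := by
      simp [hij]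
    obtain ⟨i', hi'mem, hi'ne⟩ :=
      Finset.exists_mem_ne (by rw [col2 j]; norm_num) i
    simp only [Finset.mem_filter, Finset.mem_univ, true_and] at hi'mem
    refine ⟨i', hi'ne, hi'mem, ?_⟩
    intro hrow
    rw [rows_mem] at hrow
    obtain ⟨j', hj'⟩ := hrow
    by_cases hjj : j' = j
    · subst hjj
      exact hi'ne (h2 i' i j' s hj' hij)
    · have hne : (i, j) ≠ (i', j') := by
        intro hcontra
        exact hjj ((congrArg Prod.snd hcontra).symm)
      obtain ⟨-, hnone⟩ := h3 i i' j j' s hne hij hj'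
      exact hi'mem hnone
  have occ_le : ∀ s, (occ s).card ≤ F - 1 := by
    intro s
    rcases Finset.eq_empty_or_nonempty (occ s) with he | ⟨p, hp⟩
    · rw [he]; simp
    · obtain ⟨i', -, -, hi'row⟩ := other_row s p.1 p.2 (by rwa [occ_mem] at hp ⊢)
      have hss : rows s ⊂ Finset.univ := by
        refine Finset.ssubset_univ_iff.mpr ?_
        intro hU
        exact hi'row (hU ▸ Finset.mem_univ i')
      have := Finset.card_lt_card hss
      rw [hFcard, rows_card] at this
      omega
  set FullsAt : Fin F → Finset (Fin S) :=
    fun x => Finset.univ.filter fun s => (occ s).card = F - 1 ∧ x ∉ rows s with hFA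
  set Fulls : Finset (Fin S) :=
    Finset.univ.filter fun s => (occ s).card = F - 1 with hFu
  have center_unique : ∀ s : Fin S, (occ s).card = F - 1 →
      ∀ x y : Fin F, x ∉ rows s → y ∉ rows s → x = y := by
    intro s hfull x y hx hy
    have hcard : (Finset.univ \ rows s).card = 1 := by
      rw [Finset.card_sdiff_of_subset (Finset.subset_univ _), hFcard, rows_card, hfull]
      omega
    have hx' : x ∈ Finset.univ \ rows s := by simp [hx]
    have hy' : y ∈ Finset.univ \ rows s := by simp [hy]
    exact Finset.card_le_one.mp (le_of_eq hcard) x hx' y hy'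
  have P_center : ∀ (s : Fin S) (x : Fin F), (occ s).card = F - 1 → x ∉ rows s →
      ∀ (i : Fin F) (j : Fin K), (i, j) ∈ occ s → ¬(P x j = none) := by
    intro s x hfull hx i j hij
    obtain ⟨i', hne, hsome, hrow⟩ := other_row s i j hij
    rwa [center_unique s hfull i' x hrow hx] at hsome
  have hS2 : 2 ≤ S := by
    have : 4 ≤ F := hF
    have hmF : F ≤ m * F + F := Nat.le_add_left F (m * F)
    omega
  have cx_le : ∀ x : Fin F, (FullsAt x).card ≤ m := by
    intro x
    have hdisj : ∀ s ∈ FullsAt x, ∀ s' ∈ FullsAt x, s ≠ s' →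
        Disjoint (cols s) (cols s') := by
      intro s hs s' hs' hne
      rw [Finset.disjoint_left]
      intro j hj hj'
      simp only [hFA, Finset.mem_filter, Finset.mem_univ, true_and] at hs hs'
      simp only [hcols, Finset.mem_image] at hj hj'
      obtain ⟨p, hp, hpj⟩ := hj
      obtain ⟨q, hq, hqj⟩ := hj'
      have hpx : p.1 ≠ x := by
        intro hpx
        apply hs.2
        rw [rows_mem]
        exact ⟨p.2, by rw [← hpx]; exact (occ_mem s p).mp hp⟩
      have hqx : q.1 ≠ x := by
        intro hqx
        apply hs'.2
        rw [rows_mem]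
        exact ⟨q.2, by rw [← hqx]; exact (occ_mem s' q).mp hq⟩
      have hPx : ¬(P x j = none) := by
        refine P_center s x hs.1 hs.2 p.1 j ?_
        rw [occ_mem]
        have := (occ_mem s p).mp hp
        rw [← hpj]; exact this
      have hpq : p.1 = q.1 := by
        by_contra hpq
        have hsub : ({p.1, q.1, x} : Finset (Fin F)) ⊆
            Finset.univ.filter fun i => ¬(P i j = none) := by
          intro y hy
          simp only [Finset.mem_insert, Finset.mem_singleton] at hy
          simp only [Finset.mem_filter, Finset.mem_univ, true_and]
          rcases hy with rfl | rfl | rfl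
          · have := (occ_mem s p).mp hp
            rw [hpj] at this
            simp [this]
          · have := (occ_mem s' q).mp hq
            rw [hqj] at this
            simp [this]
          · exact hPx
        have hcard3 : ({p.1, q.1, x} : Finset (Fin F)).card = 3 := by
          rw [Finset.card_insert_of_notMem (by simp [hpq, hpx]),
            Finset.card_insert_of_notMem (by simp [hqx]), Finset.card_singleton]
        have := Finset.card_le_card hsub
        rw [hcard3, col2 j] at this
        omega
      have h1p := (occ_mem s p).mp hp
      have h1q := (occ_mem s' q).mp hq
      apply hne
      have : P p.1 j = some s := by rw [← hpj]; exact h1p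
      have that : P p.1 j = some s' := by rw [hpq, ← hqj]; exact h1q
      exact Option.some_inj.mp (this.symm.trans that)
    have d : Fin S := ⟨0, by omega⟩
    set Tx := (FullsAt x).biUnion cols with hTx
    have hTxcard : Tx.card = (FullsAt x).card * (F - 1) := by
      rw [hTx, Finset.card_biUnion hdisj]
      rw [Finset.sum_congr rfl (fun s hs => ?_), Finset.sum_const, smul_eq_mul]
      rw [cols_card s]
      exact (Finset.mem_filter.mp hs).2.1
    have hmaps : ∀ j ∈ Tx, ∃ s' : Fin S, P x j = some s' ∧ s' ∉ FullsAt x := by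
      intro j hj
      rw [hTx, Finset.mem_biUnion] at hj
      obtain ⟨s, hs, hjc⟩ := hj
      simp only [hFA, Finset.mem_filter, Finset.mem_univ, true_and] at hs
      simp only [hcols, Finset.mem_image] at hjc
      obtain ⟨p, hp, hpj⟩ := hjc
      have hPx : ¬(P x j = none) := by
        refine P_center s x hs.1 hs.2 p.1 j ?_
        rw [occ_mem]
        have := (occ_mem s p).mp hp
        rw [← hpj]; exact this
      obtain ⟨s', hs'⟩ := Option.ne_none_iff_exists'.mp hPx
      refine ⟨s', hs', ?_⟩
      intro hmem
      simp only [hFA, Finset.mem_filter, Finset.mem_univ, true_and] at hmem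
      exact hmem.2 ((rows_mem s' x).mpr ⟨j, hs'⟩)
    have hinj : Set.InjOn (fun j => (P x j).getD d) Tx := by
      intro j hj j' hj' hjj
      simp only [Finset.mem_coe] at hj hj'
      obtain ⟨s1, hs1, -⟩ := hmaps j hj
      obtain ⟨s2, hs2, -⟩ := hmaps j' hj'
      simp only [hs1, hs2, Option.getD_some] at hjj
      subst hjj
      exact h1 x j j' s1 hs1 hs2
    have hmaps2 : ∀ j ∈ Tx, (P x j).getD d ∈ Finset.univ \ FullsAt x := by
      intro j hj
      obtain ⟨s', hs', hnot⟩ := hmaps j hj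
      rw [hs', Option.getD_some]
      simp [hnot]
    have hcardle := Finset.card_le_card_of_injOn _ hmaps2 hinj
    rw [hTxcard, Finset.card_sdiff_of_subset (Finset.subset_univ _), hScard] at hcardle
    have hcxS : (FullsAt x).card ≤ S := by
      exact le_trans (Finset.card_le_univ _) (le_of_eq hScard)
    have hsum : (FullsAt x).card * (F - 1) + (FullsAt x).card ≤ S := by omega
    have hmul : (FullsAt x).card * F ≤ S := by
      have hF1 : F - 1 + 1 = F := by omega
      calc (FullsAt x).card * F = (FullsAt x).card * ((F - 1) + 1) := by rw [hF1]
        _ = (FullsAt x).card * (F - 1) + (FullsAt x).card := by ring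
        _ ≤ S := hsum
    have hlt : (FullsAt x).card * F < (m + 1) * F := by
      have hexp : (m + 1) * F = m * F + F := by ring
      omega
    exact Nat.lt_succ_iff.mp (Nat.lt_of_mul_lt_mul_right hlt)
  have fulls_card : Fulls.card ≤ m * F := by
    have hsub : Fulls ⊆ Finset.univ.biUnion FullsAt := by
      intro s hs
      simp only [hFu, Finset.mem_filter, Finset.mem_univ, true_and] at hs
      have hne : rows s ≠ Finset.univ := by
        intro hU
        have := rows_card s
        rw [hU, hFcard, hs] at this
        omega
      obtain ⟨x, hx⟩ : ∃ x, x ∉ rows s := by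
        by_contra hall
        push_neg at hall
        exact hne (Finset.eq_univ_iff_forall.mpr hall)
      rw [Finset.mem_biUnion]
      refine ⟨x, Finset.mem_univ x, ?_⟩
      simp only [hFA, Finset.mem_filter, Finset.mem_univ, true_and]
      exact ⟨hs, hx⟩
    calc Fulls.card ≤ (Finset.univ.biUnion FullsAt).card := Finset.card_le_card hsub
      _ ≤ ∑ x : Fin F, (FullsAt x).card := Finset.card_biUnion_le
      _ ≤ ∑ _x : Fin F, m := Finset.sum_le_sum (fun x _ => cx_le x)
      _ = F * m := by rw [Finset.sum_const, smul_eq_mul, Finset.card_univ,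
            Fintype.card_fin]
      _ = m * F := Nat.mul_comm F m
  -- global counting
  have count1 : (Finset.univ.filter fun p : Fin F × Fin K => ¬(P p.1 p.2 = none)).card
      = 2 * K := by
    rw [Finset.card_eq_sum_card_fiberwise
      (f := Prod.snd) (t := (Finset.univ : Finset (Fin K))) (fun p _ => Finset.mem_univ _)]
    have hfib : ∀ j : Fin K,
        ((Finset.univ.filter fun p : Fin F × Fin K => ¬(P p.1 p.2 = none)).filter
          fun p => p.2 = j).card = 2 := by
      intro j
      rw [← col2 j]
      apply Finset.card_bij (fun p _ => p.1)
      · intro p hp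
        simp only [Finset.mem_filter, Finset.mem_univ, true_and] at hp ⊢
        rw [← hp.2]; exact hp.1
      · intro p hp q hq hpq
        simp only [Finset.mem_filter, Finset.mem_univ, true_and] at hp hq
        exact Prod.ext hpq (hp.2.trans hq.2.symm)
      · intro i hi
        simp only [Finset.mem_filter, Finset.mem_univ, true_and] at hi
        exact ⟨(i, j), by simp [hi], rfl⟩
    rw [Finset.sum_congr rfl (fun j _ => hfib j), Finset.sum_const, smul_eq_mul,
      Finset.card_univ, Fintype.card_fin, Nat.mul_comm]
  have count2 : (Finset.univ.filter fun p : Fin F × Fin K => ¬(P p.1 p.2 = none)).card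
      = ∑ s : Fin S, (occ s).card := by
    have hU : (Finset.univ.filter fun p : Fin F × Fin K => ¬(P p.1 p.2 = none))
        = Finset.univ.biUnion (fun s => occ s) := by
      ext p
      simp only [Finset.mem_filter, Finset.mem_univ, true_and, Finset.mem_biUnion,
        occ_mem]
      exact Option.ne_none_iff_exists' 
    rw [hU, Finset.card_biUnion]
    intro s hs s' hs' hne
    rw [Function.onFun, Finset.disjoint_left]
    intro p hp hp'
    rw [occ_mem] at hp hp'
    exact hne (Option.some_inj.mp (hp.symm.trans hp'))
  have sum_bound : ∑ s : Fin S, (occ s).card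
      ≤ Fulls.card * (F - 1) + (S - Fulls.card) * (F - 2) := by
    rw [← Finset.sum_filter_add_sum_filter_not Finset.univ
      (fun s => (occ s).card = F - 1)]
    have hpart1 : ∑ s ∈ (Finset.univ.filter fun s => (occ s).card = F - 1),
        (occ s).card = Fulls.card * (F - 1) := by
      rw [Finset.sum_congr rfl (fun s hs => (Finset.mem_filter.mp hs).2),
        Finset.sum_const, smul_eq_mul]
    have hpart2 : ∑ s ∈ (Finset.univ.filter fun s => ¬((occ s).card = F - 1)),
        (occ s).card ≤ (S - Fulls.card) * (F - 2) := by
      have hcards : (Finset.univ.filter fun s : Fin S =>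
          ¬((occ s).card = F - 1)).card = S - Fulls.card := by
        have := Finset.card_filter_add_card_filter_not
          (s := (Finset.univ : Finset (Fin S))) (p := fun s => (occ s).card = F - 1)
        rw [hScard] at this
        have hle : (Finset.univ.filter fun s : Fin S =>
            (occ s).card = F - 1).card ≤ S :=
          le_trans (Finset.card_le_univ _) (le_of_eq hScard)
        rw [hFu]
        omega
      calc ∑ s ∈ (Finset.univ.filter fun s => ¬((occ s).card = F - 1)), (occ s).card
          ≤ (Finset.univ.filter fun s : Fin S =>
              ¬((occ s).card = F - 1)).card • (F - 2) := by
            apply Finset.sum_le_card_nsmul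
            intro s hs
            have h1 := occ_le s
            have h2 := (Finset.mem_filter.mp hs).2
            omega
        _ = (S - Fulls.card) * (F - 2) := by rw [hcards, smul_eq_mul]
    exact Nat.add_le_add (le_of_eq hpart1) hpart2
  -- final arithmetic
  have hDS : Fulls.card ≤ S := by
    exact le_trans (Finset.card_le_univ _) (le_of_eq hScard)
  have h2K : 2 * K ≤ Fulls.card * (F - 1) + (S - Fulls.card) * (F - 2) := by
    rw [← count1, count2]; exact sum_bound
  set D := Fulls.card with hD
  obtain ⟨f, rfl⟩ : ∃ f, F = f + 4 := ⟨F - 4, by omega⟩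
  have e1 : f + 4 - 1 = f + 3 := by omega
  have e2 : f + 4 - 2 = f + 2 := by omega
  have e3 : f + 4 - 3 = f + 1 := by omega
  rw [e1, e2] at h2K
  have hS' : S = m * (f + 4) + (f + 2) := by
    rw [hS]; have : m * (f + 4) + (f + 4) - 2 = m * (f + 4) + (f + 2) := by omega
    exact this
  have e4 : D * (f + 3) + (S - D) * (f + 2) = (D + (S - D)) * (f + 2) + D := by ring
  have e5 : D + (S - D) = S := by omega
  rw [e4, e5] at h2K
  have h2K2 : 2 * K ≤ S * (f + 2) + m * (f + 4) :=
    le_trans h2K (Nat.add_le_add_left fulls_card _)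
  have e6 : S * (f + 2) + m * (f + 4) = (m * (f + 4) * (f + 3) + (f + 2) * (f + 1)) + (f + 2) := by
    rw [hS']; ring
  rw [e6] at h2K2
  have heven : (m * (f + 4) * (f + 3) + (f + 2) * (f + 1)) % 2 = 0 := by
    apply Nat.even_iff.mp
    apply Even.add
    · have h := Nat.even_mul_succ_self (f + 3)
      rw [show m * (f + 4) * (f + 3) = m * ((f + 3) * ((f + 3) + 1)) from by ring]
      exact h.mul_left m
    · rw [show (f + 2) * (f + 1) = (f + 1) * ((f + 1) + 1) from by ring]
      exact Nat.even_mul_succ_self (f + 1)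
  rw [e1, e2, e3]
  set A := m * (f + 4) * (f + 3) + (f + 2) * (f + 1) with hA
  omega

theorem pda_optimal_S_eq_mF_add_F_sub_two (F m : ℕ) (hF : 4 ≤ F) (hm : 1 ≤ m) :
    IsGreatest {K : ℕ | PDAExists K F (F - 2) (m * F + F - 2)}
      ((m * F * (F - 1) + (F - 2) * (F - 3)) / 2 + (F - 2) / 2) := by
  constructor
  · exact pda_construction F m hF
  · intro K hK
    exact pda_upper F m K (m * F + F - 2) hF rfl hK
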